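/- arXiv:1801.09234 — 2 statements merged into one kernel-verified Lean document; each statement's English description precedes it below -/
import Mathlib

section
/- Let N be a normal σ_i-subgroup of a finite group G. Then N ≤ Z_σ(G) if and only if O^{σ_i}(G) ≤ C_G(N); equivalently, N lies in the σ-hypercentre of G if and only if the quotient G/C_G(N) is a σ_i-group. -/
open Subgroup Pointwise

/-- A finite group (or any type) is a `π`-group if every prime dividing its
cardinality belongs to `π`. -/
def IsPiGroup (π : Set ℕ) (X : Type*) : Prop :=
  ∀ p : ℕ, p.Prime → p ∣ Nat.card X → p ∈ π

/-- The complementary set of primes `π'`. -/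
def primeCompl (π : Set ℕ) : Set ℕ := {p : ℕ | p.Prime ∧ p ∉ π}

/-- `σ : I → Set ℕ` is a partition of the set of all primes: the `σ i` consist of
primes, and every prime belongs to exactly one `σ i` (so they are pairwise
disjoint and their union is the set of all primes). -/
def IsPrimePartition {I : Type*} (σ : I → Set ℕ) : Prop :=
  (∀ i, ∀ p ∈ σ i, p.Prime) ∧ ∀ p : ℕ, p.Prime → ∃! i, p ∈ σ i

/-- A group is `σ`-primary if it is a `σ i`-group for some `i`. -/
def IsSigmaPrimary {I : Type*} (σ : I → Set ℕ) (X : Type*) : Prop :=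
  ∃ i, IsPiGroup (σ i) X

/-- `σ (n)`: the set of indices `i` such that `σ i` contains a prime dividing `n`. -/
def sigmaOf {I : Type*} (σ : I → Set ℕ) (n : ℕ) : Set I :=
  {i | ∃ p : ℕ, p.Prime ∧ p ∈ σ i ∧ p ∣ n}

/-- `A` is a modular subgroup of `G` (a modular element of the subgroup lattice). -/
def IsModularSubgroup {G : Type*} [Group G] (A : Subgroup G) : Prop :=
  (∀ X Z : Subgroup G, X ≤ Z → X ⊔ (A ⊓ Z) = (X ⊔ A) ⊓ Z) ∧
  (∀ Y Z : Subgroup G, A ≤ Z → A ⊔ (Y ⊓ Z) = (A ⊔ Y) ⊓ Z)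

/-- `A` is `σ`-subnormal in `G`: there is a chain `A = A₀ ≤ A₁ ≤ ⋯ ≤ Aₙ = G`
such that each `A i` is normal in `A (i+1)` or `A (i+1) / (A i)_{A (i+1)}` is
`σ`-primary. -/
def IsSigmaSubnormal {I : Type*} (σ : I → Set ℕ) {G : Type*} [Group G]
    (A : Subgroup G) : Prop :=
  ∃ (n : ℕ) (c : Fin (n + 1) → Subgroup G),
    c 0 = A ∧ c (Fin.last n) = ⊤ ∧
    ∀ i : Fin n,
      c i.castSucc ≤ c i.succ ∧
        (((c i.castSucc).subgroupOf (c i.succ)).Normal ∨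
          IsSigmaPrimary σ
            (c i.succ ⧸ ((c i.castSucc).subgroupOf (c i.succ)).normalCore))

/-- `A` is `σ`-quasinormal in `G` if it is modular and `σ`-subnormal in `G`. -/
def IsSigmaQuasinormal {I : Type*} (σ : I → Set ℕ) {G : Type*} [Group G]
    (A : Subgroup G) : Prop :=
  IsModularSubgroup A ∧ IsSigmaSubnormal σ A

/-- `H` is a Hall `π`-subgroup of `G`: `|H|` is a `π`-number and `[G : H]` has no
prime divisors in `π`. -/
def IsHallPiSubgroup (π : Set ℕ) {G : Type*} [Group G] (H : Subgroup G) : Prop :=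
  IsPiGroup π H ∧ ∀ p : ℕ, p.Prime → p ∣ H.index → p ∉ π

/-- Two subgroups permute if `AB = BA` as sets. -/
def Permutes {G : Type*} [Group G] (A B : Subgroup G) : Prop :=
  (A : Set G) * (B : Set G) = (B : Set G) * (A : Set G)

/-- A group is `σ`-nilpotent if it is a direct product of `σ`-primary groups. -/
def IsSigmaNilpotent {I : Type*} (σ : I → Set ℕ) (X : Type*) [Group X] : Prop :=
  ∃ (n : ℕ) (H : Fin n → GrpCat.{0}),
    (∀ i, Finite (H i)) ∧ (∀ i, IsSigmaPrimary σ (H i)) ∧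
      Nonempty (X ≃* ((i : Fin n) → H i))

/-- `C_G(H/K)`: the set of all `g ∈ G` such that `⁅h, g⁆ ∈ K` for all `h ∈ H`,
realized as the preimage in `G` of the centralizer of the image of `H` in `G ⧸ K`. -/
def quotCentralizer {G : Type*} [Group G] (H K : Subgroup G) (hK : K.Normal) :
    Subgroup G :=
  haveI := hK
  Subgroup.comap (QuotientGroup.mk' K)
    (Subgroup.centralizer ((H.map (QuotientGroup.mk' K) : Subgroup (G ⧸ K)) : Set (G ⧸ K)))

/-- `H/K` is a chief factor of `G`: `K < H` are normal subgroups of `G` with no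
normal subgroup of `G` strictly between them. -/
def IsChiefFactor {G : Type*} [Group G] (H K : Subgroup G) : Prop :=
  K.Normal ∧ H.Normal ∧ K < H ∧
    ∀ L : Subgroup G, L.Normal → K ≤ L → L ≤ H → L = K ∨ L = H

/-- A factor `H/K` (with `K` normal in `G`) is `σ`-central in `G`:
there is an `i` such that both `H/K` and `G/C_G(H/K)` are `σ i`-groups
(equivalently, `(H/K) ⋊ (G/C_G(H/K))` is `σ`-primary). -/
def IsSigmaCentral {I : Type*} (σ : I → Set ℕ) {G : Type*} [Group G]
    (H K : Subgroup G) (hK : K.Normal) : Prop :=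
  ∃ i, IsPiGroup (σ i) (H ⧸ K.subgroupOf H) ∧
    IsPiGroup (σ i) (G ⧸ quotCentralizer H K hK)

/-- A normal subgroup `E` of `G` is `σ`-hypercentral in `G` if either `E = 1` or
every chief factor of `G` below `E` is `σ`-central in `G`. -/
def IsSigmaHypercentral {I : Type*} (σ : I → Set ℕ) {G : Type*} [Group G]
    (E : Subgroup G) : Prop :=
  E.Normal ∧ (E = ⊥ ∨
    ∀ H K : Subgroup G, (hc : IsChiefFactor H K) → H ≤ E →
      IsSigmaCentral σ H K hc.1)

/-- The `σ`-hypercentre `Z_σ(G)`: the product of all `σ`-hypercentral normal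
subgroups of `G`. -/
def sigmaHypercentre {I : Type*} (σ : I → Set ℕ) (G : Type*) [Group G] : Subgroup G :=
  sSup {E : Subgroup G | IsSigmaHypercentral σ E}

/-- `O_π(X)`: the largest normal `π`-subgroup of `X` (the product of all normal
`π`-subgroups). -/
def piCore (π : Set ℕ) (X : Type*) [Group X] : Subgroup X :=
  sSup {N : Subgroup X | N.Normal ∧ IsPiGroup π N}

/-- `O^π(X)`: the smallest normal subgroup of `X` whose quotient is a `π`-group. -/
def piResidual (π : Set ℕ) (X : Type*) [Group X] : Subgroup X :=
  sInf {N : Subgroup X | N.Normal ∧ IsPiGroup π (X ⧸ N)}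

/-- A family of subgroups forms an internal direct product decomposition of `X`. -/
def IsInternalDirectProduct {X : Type*} [Group X] {ι : Type*}
    (N : ι → Subgroup X) : Prop :=
  (∀ i, (N i).Normal) ∧ iSupIndep N ∧ iSup N = ⊤

/-- `X` is `π`-decomposable: `X = O_π(X) × O_{π'}(X)` (internal direct product). -/
def IsPiDecomposable (π : Set ℕ) (X : Type*) [Group X] : Prop :=
  (piCore π X).Normal ∧ (piCore (primeCompl π) X).Normal ∧
    Disjoint (piCore π X) (piCore (primeCompl π) X) ∧
      piCore π X ⊔ piCore (primeCompl π) X = ⊤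

/-- `X` is `π`-special for a finite set of primes `π = {p₁, …, pₙ}`:
`X = O_{p₁}(X) × ⋯ × O_{pₙ}(X) × O_{π'}(X)` (internal direct product). -/
def IsPiSpecial (π : Finset ℕ) (X : Type*) [Group X] : Prop :=
  IsInternalDirectProduct (fun o : Option {p : ℕ // p ∈ π} =>
    o.elim (piCore (primeCompl ↑π) X) (fun p => piCore {(p : ℕ)} X))

/-- The chain condition of Corollary 1.3: each factor is normal or the
corresponding quotient is a `π₀`-group for some `π₀ ∈ {π, π'}`. -/
def IsPiPiPrimeSubnormal (π : Set ℕ) {G : Type*} [Group G] (A : Subgroup G) : Prop :=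
  ∃ (n : ℕ) (c : Fin (n + 1) → Subgroup G),
    c 0 = A ∧ c (Fin.last n) = ⊤ ∧
    ∀ i : Fin n,
      c i.castSucc ≤ c i.succ ∧
        (((c i.castSucc).subgroupOf (c i.succ)).Normal ∨
          ∃ π₀ ∈ ({π, primeCompl π} : Set (Set ℕ)),
            IsPiGroup π₀
              (c i.succ ⧸ ((c i.castSucc).subgroupOf (c i.succ)).normalCore))

/-- The chain condition of Corollary 1.4: each factor is normal or the
corresponding quotient is a `π'`-group. -/
def IsPiPrimeSubnormal (π : Set ℕ) {G : Type*} [Group G] (A : Subgroup G) : Prop :=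
  ∃ (n : ℕ) (c : Fin (n + 1) → Subgroup G),
    c 0 = A ∧ c (Fin.last n) = ⊤ ∧
    ∀ i : Fin n,
      c i.castSucc ≤ c i.succ ∧
        (((c i.castSucc).subgroupOf (c i.succ)).Normal ∨
          IsPiGroup (primeCompl π)
            (c i.succ ⧸ ((c i.castSucc).subgroupOf (c i.succ)).normalCore))

/-- The centralizer of (the carrier of) a normal subgroup is normal. -/
theorem centralizer_normal_of_normal {G : Type*} [Group G] {N : Subgroup G}
    (hN : N.Normal) : (Subgroup.centralizer (N : Set G)).Normal := by
  constructor
  intro g hg c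
  rw [Subgroup.mem_centralizer_iff] at hg ⊢
  intro s hs
  have hs' : c⁻¹ * s * c ∈ (N : Set G) := hN.conj_mem' s hs c
  have h := hg _ hs'
  have : c * ((c⁻¹ * s * c) * g) * c⁻¹ = c * (g * (c⁻¹ * s * c)) * c⁻¹ := by rw [h]
  calc s * (c * g * c⁻¹) = c * ((c⁻¹ * s * c) * g) * c⁻¹ := by group
    _ = c * (g * (c⁻¹ * s * c)) * c⁻¹ := this
    _ = (c * g * c⁻¹) * s := by group

/-- `C_G(H/K)` is normal in `G` whenever `H` and `K` are. -/
theorem quotCentralizer_normal {G : Type*} [Group G] {H K : Subgroup G}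
    (hK : K.Normal) (hH : H.Normal) : (quotCentralizer H K hK).Normal := by
  haveI := hK
  exact (centralizer_normal_of_normal
    (hH.map (QuotientGroup.mk' K) (QuotientGroup.mk'_surjective K))).comap _

section AuxLemmas

variable {G : Type*} [Group G]

theorem normal_inf' {A B : Subgroup G} (hA : A.Normal) (hB : B.Normal) : (A ⊓ B).Normal :=
  ⟨fun n hn g => ⟨hA.conj_mem n hn.1 g, hB.conj_mem n hn.2 g⟩⟩

theorem normal_sInf' {T : Set (Subgroup G)} (hT : ∀ Q ∈ T, Q.Normal) : (sInf T).Normal :=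
  ⟨fun n hn g => Subgroup.mem_sInf.2 fun Q hQ =>
    (hT Q hQ).conj_mem n (Subgroup.mem_sInf.1 hn Q hQ) g⟩

theorem dedekind' {A B C : Subgroup G} (hB : B.Normal) (hAC : A ≤ C) :
    (A ⊔ B) ⊓ C = A ⊔ (B ⊓ C) := by
  haveI := hB
  refine le_antisymm ?_ (sup_le (le_inf le_sup_left hAC)
    (le_inf (inf_le_left.trans le_sup_right) inf_le_right))
  intro x hx
  obtain ⟨hx1, hx2⟩ := Subgroup.mem_inf.mp hx
  rw [← SetLike.mem_coe, Subgroup.mul_normal] at hx1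
  obtain ⟨a, ha, b, hb, rfl⟩ := hx1
  have hbC : b ∈ C := by
    have : a⁻¹ * (a * b) ∈ C := mul_mem (hAC (inv_mem ha)) hx2
    simpa using this
  exact mul_mem (Subgroup.mem_sup_left ha) (Subgroup.mem_sup_right (Subgroup.mem_inf.mpr ⟨hb, hbC⟩))

theorem mem_quotCentralizer_iff {H K : Subgroup G} (hK : K.Normal) (g : G) :
    g ∈ quotCentralizer H K hK ↔ ∀ h ∈ H, g⁻¹ * h⁻¹ * g * h ∈ K := by
  haveI := hK
  simp only [quotCentralizer, Subgroup.mem_comap, Subgroup.mem_centralizer_iff]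
  constructor
  · intro hg h hh
    have h1 := hg ((QuotientGroup.mk' K) h)
      (by rw [SetLike.mem_coe]; exact Subgroup.mem_map_of_mem _ hh)
    rw [QuotientGroup.mk'_apply, QuotientGroup.mk'_apply, ← QuotientGroup.mk_mul,
      ← QuotientGroup.mk_mul, QuotientGroup.eq] at h1
    have e : (h * g)⁻¹ * (g * h) = g⁻¹ * h⁻¹ * g * h := by group
    rw [e] at h1
    exact h1
  · intro hg q hq
    rw [SetLike.mem_coe, Subgroup.mem_map] at hq
    obtain ⟨h, hh, rfl⟩ := hq
    rw [QuotientGroup.mk'_apply, QuotientGroup.mk'_apply, ← QuotientGroup.mk_mul,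
      ← QuotientGroup.mk_mul, QuotientGroup.eq]
    have e : (h * g)⁻¹ * (g * h) = g⁻¹ * h⁻¹ * g * h := by group
    rw [e]
    exact hg h hh

theorem mem_qc_sup {B H : Subgroup G} (hB : B.Normal) (hH : H.Normal) (g : G) :
    (∀ h ∈ H, g⁻¹ * h⁻¹ * g * h ∈ H ⊓ B) ↔ ∀ y ∈ B ⊔ H, g⁻¹ * y⁻¹ * g * y ∈ B := by
  haveI := hB; haveI := hH
  constructor
  · intro hg y hy
    rw [← SetLike.mem_coe, Subgroup.normal_mul] at hy
    obtain ⟨b, hb, h, hh, rfl⟩ := hy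
    have h1 : g⁻¹ * h⁻¹ * g * h ∈ B := (Subgroup.mem_inf.mp (hg h hh)).2
    have h2 : h⁻¹ * (g⁻¹ * b⁻¹ * g * b) * h ∈ B :=
      hB.conj_mem' _ (mul_mem (hB.conj_mem' _ (inv_mem hb) g) hb) h
    have e : g⁻¹ * (b * h)⁻¹ * g * (b * h) =
        (g⁻¹ * h⁻¹ * g * h) * (h⁻¹ * (g⁻¹ * b⁻¹ * g * b) * h) := by group
    rw [e]
    exact mul_mem h1 h2
  · intro hg h hh
    refine Subgroup.mem_inf.mpr ⟨?_, hg h ((le_sup_right : H ≤ B ⊔ H) hh)⟩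
    exact mul_mem (hH.conj_mem' _ (inv_mem hh) g) hh

theorem normal_finsetSup {s : Finset (Subgroup G)} (hs : ∀ E ∈ s, E.Normal) :
    (s.sup id).Normal := by
  refine Finset.sup_induction (inferInstance : (⊥ : Subgroup G).Normal) ?_ hs
  intro a ha b hb
  haveI := ha; haveI := hb
  infer_instance

theorem piGroup_quotient_sInf (π : Set ℕ) {G : Type*} [Group G] [Finite G]
    (T : Set (Subgroup G)) (hT : ∀ Q ∈ T, Q.Normal ∧ IsPiGroup π (G ⧸ Q)) :
    IsPiGroup π (G ⧸ sInf T) := by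
  haveI hD : (sInf T).Normal := normal_sInf' fun Q hQ => (hT Q hQ).1
  intro p pp pdvd
  by_contra hp
  haveI : Fintype (G ⧸ sInf T) := Fintype.ofFinite _
  rw [Nat.card_eq_fintype_card] at pdvd
  haveI : Fact p.Prime := ⟨pp⟩
  obtain ⟨x, hx⟩ := exists_prime_orderOf_dvd_card p pdvd
  obtain ⟨g, rfl⟩ := QuotientGroup.mk_surjective x
  have hgp : g ^ p ∈ sInf T := by
    rw [← QuotientGroup.eq_one_iff, QuotientGroup.mk_pow, ← hx]
    exact pow_orderOf_eq_one _
  have hg : g ∈ sInf T := by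
    rw [Subgroup.mem_sInf]
    intro Q hQ
    haveI := (hT Q hQ).1
    have h1 : (QuotientGroup.mk g : G ⧸ Q) ^ p = 1 := by
      rw [← QuotientGroup.mk_pow, QuotientGroup.eq_one_iff]
      exact Subgroup.mem_sInf.1 hgp Q hQ
    rcases pp.eq_one_or_self_of_dvd _ (orderOf_dvd_of_pow_eq_one h1) with h | h
    · exact (QuotientGroup.eq_one_iff g).mp (orderOf_eq_one_iff.mp h)
    · exact absurd ((hT Q hQ).2 p pp (h ▸ orderOf_dvd_natCard _)) hp
  have h2 : (QuotientGroup.mk g : G ⧸ sInf T) = 1 := (QuotientGroup.eq_one_iff g).mpr hg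
  rw [h2, orderOf_one] at hx
  exact pp.one_lt.ne hx

end AuxLemmas

theorem cent_aux {I : Type*} (σ : I → Set ℕ) (hσ : IsPrimePartition σ) {G : Type*} [Group G]
    [Finite G] (i : I) (N : Subgroup G) (hNi : IsPiGroup (σ i) N)
    (s : Finset (Subgroup G)) :
    (∀ E ∈ s, IsSigmaHypercentral σ E) →
    ∀ (H K : Subgroup G) (hcf : IsChiefFactor H K), H ≤ N → H ≤ K ⊔ s.sup id →
    IsPiGroup (σ i) (G ⧸ quotCentralizer H K hcf.1) := by
  classical
  induction s using Finset.induction_on with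
  | empty =>
    intro _ H K hcf _ hle
    rw [Finset.sup_empty, sup_bot_eq] at hle
    exact absurd hle hcf.2.2.1.not_ge
  | @insert E s₀ hEs ih =>
    intro hs H K hcf hHN hle
    have hKn := hcf.1
    have hHn := hcf.2.1
    have hKH := hcf.2.2.1
    have hmin := hcf.2.2.2
    haveI := hKn; haveI := hHn
    have hs₀ : ∀ E' ∈ s₀, IsSigmaHypercentral σ E' := fun E' h => hs E' (Finset.mem_insert_of_mem h)
    have hEhyp : IsSigmaHypercentral σ E := hs E (Finset.mem_insert_self E s₀)
    haveI hEn : E.Normal := hEhyp.1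
    haveI hsupn : (s₀.sup id).Normal := normal_finsetSup (fun E' h => (hs₀ E' h).1)
    set B := K ⊔ s₀.sup id with hBdef
    haveI hBn : B.Normal := by rw [hBdef]; infer_instance
    have hle' : H ≤ B ⊔ E := by
      rw [Finset.sup_insert] at hle
      calc H ≤ K ⊔ (id E ⊔ s₀.sup id) := hle
      _ = B ⊔ E := by
        simp only [id]
        rw [hBdef, sup_comm E (s₀.sup id), ← sup_assoc]
    by_cases hHB : H ≤ B
    · exact ih hs₀ H K hcf hHN (by rw [← hBdef]; exact hHB)
    · have hKB : K ≤ B := by rw [hBdef]; exact le_sup_left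
      haveI hHBn : (H ⊓ B).Normal := normal_inf' hHn hBn
      have hHBK : H ⊓ B = K := by
        rcases hmin (H ⊓ B) hHBn (le_inf hKH.le hKB) inf_le_left with h | h
        · exact h
        · exact absurd (h ▸ (inf_le_right : H ⊓ B ≤ B)) hHB
      set T := E ⊓ (B ⊔ H) with hTdef
      haveI hTn : T.Normal := by rw [hTdef]; exact normal_inf' hEn inferInstance
      have hTle : T ≤ E := by rw [hTdef]; exact inf_le_left
      have hTleBH : T ≤ B ⊔ H := by rw [hTdef]; exact inf_le_right
      have hBH_le_BE : B ⊔ H ≤ B ⊔ E := sup_le le_sup_left hle'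
      have f1 : B ⊔ T = B ⊔ H := by
        rw [hTdef, ← dedekind' hEn (le_sup_left : B ≤ B ⊔ H)]
        exact inf_eq_right.mpr hBH_le_BE
      have hTB : T ⊓ B = E ⊓ B := by
        rw [hTdef, inf_assoc, inf_eq_right.mpr (le_sup_left : B ≤ B ⊔ H)]
      have hTnB : ¬ T ≤ B := by
        intro h
        apply hHB
        have h2 : B ⊔ H = B := by rw [← f1]; exact sup_eq_left.mpr h
        exact le_sup_right.trans h2.le
      have hEbot : E ≠ ⊥ := by
        intro h
        exact hTnB (by rw [hTdef, h, bot_inf_eq]; exact bot_le)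
      have hEBT : E ⊓ B ≤ T := by
        rw [hTdef]; exact le_inf inf_le_left (inf_le_right.trans le_sup_left)
      have hEBltT : E ⊓ B < T :=
        lt_of_le_of_ne hEBT (fun h => hTnB (h ▸ (inf_le_right : E ⊓ B ≤ B)))
      haveI hEBn : (E ⊓ B).Normal := normal_inf' hEn hBn
      have chiefT : IsChiefFactor T (E ⊓ B) := by
        refine ⟨hEBn, hTn, hEBltT, ?_⟩
        intro L hLn hL1 hL2
        haveI := hLn
        rcases hmin (H ⊓ (B ⊔ L)) (normal_inf' hHn inferInstance)
            (le_inf hKH.le (hKB.trans le_sup_left)) inf_le_left with h | h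
        · left
          have hBL : B ⊔ L = B := by
            have h1 : B ⊔ L ≤ B ⊔ H := sup_le le_sup_left (hL2.trans hTleBH)
            calc B ⊔ L = (B ⊔ H) ⊓ (B ⊔ L) := (inf_eq_right.mpr h1).symm
            _ = B ⊔ (H ⊓ (B ⊔ L)) := dedekind' hHn le_sup_left
            _ = B ⊔ K := by rw [h]
            _ = B := sup_eq_left.mpr hKB
          have hLB : L ≤ B := le_sup_right.trans hBL.le
          exact le_antisymm (le_inf (hL2.trans hTle) hLB) hL1
        · right
          have hBL : B ⊔ L = B ⊔ H :=
            le_antisymm (sup_le le_sup_left (hL2.trans hTleBH))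
              (sup_le le_sup_left (h ▸ (inf_le_right : H ⊓ (B ⊔ L) ≤ B ⊔ L)))
          have h5 : B ⊓ T ≤ L := by rw [inf_comm, hTB]; exact hL1
          calc L = L ⊔ (B ⊓ T) := (sup_eq_left.mpr h5).symm
          _ = (L ⊔ B) ⊓ T := (dedekind' hBn hL2).symm
          _ = (B ⊔ H) ⊓ T := by rw [sup_comm L B, hBL]
          _ = T := inf_eq_right.mpr hTleBH
      obtain ⟨j, hj1, hj2⟩ := (hEhyp.2.resolve_left hEbot) T (E ⊓ B) chiefT hTle
      have hQC : quotCentralizer H K hcf.1 = quotCentralizer T (E ⊓ B) chiefT.1 := by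
        ext g
        rw [mem_quotCentralizer_iff, mem_quotCentralizer_iff]
        have e1 := mem_qc_sup hBn hHn g
        rw [hHBK] at e1
        have e2 := mem_qc_sup hBn hTn g
        rw [hTB] at e2
        rw [e1, e2, f1]
      have hcard : Nat.card (↥T ⧸ (E ⊓ B).subgroupOf T) = Nat.card (↥H ⧸ K.subgroupOf H) := by
        show (E ⊓ B).relIndex T = K.relIndex H
        calc (E ⊓ B).relIndex T = (B ⊓ T).relIndex T := by rw [inf_comm B T, hTB]
        _ = B.relIndex T := Subgroup.inf_relIndex_right B T
        _ = B.relIndex (T ⊔ B) := (Subgroup.relIndex_sup_right T B).symm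
        _ = B.relIndex (H ⊔ B) := by rw [sup_comm T B, sup_comm H B, f1]
        _ = B.relIndex H := Subgroup.relIndex_sup_right H B
        _ = (B ⊓ H).relIndex H := (Subgroup.inf_relIndex_right B H).symm
        _ = K.relIndex H := by rw [inf_comm B H, hHBK]
      have hne1 : Nat.card (↥H ⧸ K.subgroupOf H) ≠ 1 := by
        obtain ⟨h0, hh0, hh0K⟩ := SetLike.exists_of_lt hKH
        have hne : (QuotientGroup.mk (⟨h0, hh0⟩ : H) : ↥H ⧸ K.subgroupOf H) ≠ 1 := by
          rw [Ne, QuotientGroup.eq_one_iff]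
          simpa [Subgroup.mem_subgroupOf] using hh0K
        haveI : Nontrivial (↥H ⧸ K.subgroupOf H) := nontrivial_of_ne _ _ hne
        exact (Finite.one_lt_card (α := ↥H ⧸ K.subgroupOf H)).ne'
      obtain ⟨p, pp, pd⟩ := Nat.exists_prime_and_dvd hne1
      have hpj : p ∈ σ j := hj1 p pp (by rw [hcard]; exact pd)
      have hpi : p ∈ σ i := hNi p pp (pd.trans
        ((Subgroup.index_dvd_card (H := K.subgroupOf H)).trans (Subgroup.card_dvd_of_le hHN)))
      obtain ⟨i', -, huniq⟩ := hσ.2 p pp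
      have hij : j = i := (huniq j hpj).trans (huniq i hpi).symm
      rw [hQC]
      exact hij ▸ hj2

/-- For a normal `σ i`-subgroup `N` of `G`: `N ≤ Z_σ(G)` iff
`O^{σ i}(G) ≤ C_G(N)`, equivalently iff `G/C_G(N)` is a `σ i`-group. -/
theorem normal_sigmaPrimary_le_sigmaHypercentre_iff {I : Type*} (σ : I → Set ℕ)
    (hσ : IsPrimePartition σ) {G : Type*} [Group G] [Finite G] (i : I)
    (N : Subgroup G) (hN : N.Normal) (hNi : IsPiGroup (σ i) N) :
    (N ≤ sigmaHypercentre σ G ↔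
        piResidual (σ i) G ≤ Subgroup.centralizer (N : Set G)) ∧
      (N ≤ sigmaHypercentre σ G ↔
        IsPiGroup (σ i) (G ⧸ Subgroup.centralizer (N : Set G))) := by
  haveI := hN
  set C := Subgroup.centralizer (N : Set G) with hCdef
  haveI hCn : C.Normal := centralizer_normal_of_normal hN
  have keyPR : IsPiGroup (σ i) (G ⧸ piResidual (σ i) G) :=
    piGroup_quotient_sInf _ _ (fun Q hQ => hQ)
  -- Backward implication
  have P3 : piResidual (σ i) G ≤ C → N ≤ sigmaHypercentre σ G := by
    intro hres
    refine le_sSup ⟨hN, Or.inr ?_⟩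
    intro H K hcf hHN
    refine ⟨i, ?_, ?_⟩
    · intro p pp pd
      exact hNi p pp (pd.trans
        ((Subgroup.index_dvd_card (H := K.subgroupOf H)).trans (Subgroup.card_dvd_of_le hHN)))
    · have hCQ : C ≤ quotCentralizer H K hcf.1 := by
        intro g hg
        rw [mem_quotCentralizer_iff]
        intro h hh
        have hcomm : h * g = g * h := Subgroup.mem_centralizer_iff.mp hg h (hHN hh)
        have e : g⁻¹ * h⁻¹ * g * h = 1 := by
          calc g⁻¹ * h⁻¹ * g * h = g⁻¹ * h⁻¹ * (g * h) := by group
          _ = g⁻¹ * h⁻¹ * (h * g) := by rw [← hcomm]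
          _ = 1 := by group
        rw [e]
        exact K.one_mem
      intro p pp pd
      exact keyPR p pp (pd.trans (Subgroup.index_dvd_of_le (hres.trans hCQ)))
  -- Forward implication
  have P1 : N ≤ sigmaHypercentre σ G → IsPiGroup (σ i) (G ⧸ C) := by
    intro hZ
    haveI : Finite (Subgroup G) := Finite.of_injective _ SetLike.coe_injective
    have hfin : {E : Subgroup G | IsSigmaHypercentral σ E}.Finite := Set.toFinite _
    set s : Finset (Subgroup G) := hfin.toFinset with hsdef
    have hkey : s.sup id = sigmaHypercentre σ G := by
      rw [hsdef, Finset.sup_id_eq_sSup, hfin.coe_toFinset]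
      rfl
    set TQ : Set (Subgroup G) :=
      {Q : Subgroup G | ∃ H K : Subgroup G, ∃ hcf : IsChiefFactor H K,
        H ≤ N ∧ Q = quotCentralizer H K hcf.1} with hTQdef
    have hTQ : ∀ Q ∈ TQ, Q.Normal ∧ IsPiGroup (σ i) (G ⧸ Q) := by
      rintro Q ⟨H, K, hcf, hHN, rfl⟩
      refine ⟨quotCentralizer_normal hcf.1 hcf.2.1, ?_⟩
      refine cent_aux σ hσ i N hNi s (fun E hE => hfin.mem_toFinset.mp hE) H K hcf hHN ?_
      calc H ≤ N := hHN
      _ ≤ sigmaHypercentre σ G := hZ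
      _ = s.sup id := hkey.symm
      _ ≤ K ⊔ s.sup id := le_sup_right
    set D := sInf TQ with hDdef
    haveI hDn : D.Normal := normal_sInf' fun Q hQ => (hTQ Q hQ).1
    have hDpi : IsPiGroup (σ i) (G ⧸ D) := piGroup_quotient_sInf _ TQ hTQ
    intro p pp pd
    by_contra hp
    haveI : Fintype (G ⧸ C) := Fintype.ofFinite _
    rw [Nat.card_eq_fintype_card] at pd
    haveI : Fact p.Prime := ⟨pp⟩
    obtain ⟨xq, hxq⟩ := exists_prime_orderOf_dvd_card p pd
    obtain ⟨g, rfl⟩ := QuotientGroup.mk_surjective xq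
    set m := Nat.card (G ⧸ D) with hm
    have hpm : ¬ p ∣ m := fun h => hp (hDpi p pp h)
    set x := g ^ m with hxdef
    have hxD : x ∈ D := by
      rw [hxdef, ← QuotientGroup.eq_one_iff, QuotientGroup.mk_pow]
      exact pow_card_eq_one'
    have hxnotC : x ∉ C := by
      intro hxC
      have h1 : (QuotientGroup.mk g : G ⧸ C) ^ m = 1 := by
        rw [← QuotientGroup.mk_pow, QuotientGroup.eq_one_iff]
        exact hxC
      exact hpm (hxq ▸ orderOf_dvd_of_pow_eq_one h1)
    have hxpC : x ^ p ∈ C := by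
      have h1 : (QuotientGroup.mk (x ^ p) : G ⧸ C) = 1 := by
        rw [hxdef, ← pow_mul, mul_comm m p, pow_mul, QuotientGroup.mk_pow,
          QuotientGroup.mk_pow, ← hxq, pow_orderOf_eq_one, one_pow]
      exact (QuotientGroup.eq_one_iff _).mp h1
    have hpN : ¬ p ∣ Nat.card N := fun h => hp (hNi p pp h)
    -- stability argument
    have stab : ∀ (n : ℕ) (M : Subgroup G), M.Normal → M ≤ N → Nat.card M ≤ n →
        ∀ y ∈ M, x⁻¹ * y * x = y := by
      intro n
      induction n with
      | zero =>
        intro M _ _ hcard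
        exact absurd hcard (by have := Nat.card_pos (α := M); omega)
      | succ n ihn =>
        intro M hMn hMN hcard y hy
        by_cases hMbot : M = ⊥
        · rw [hMbot, Subgroup.mem_bot] at hy
          rw [hy]; group
        · obtain ⟨K, ⟨hKn, hKM⟩, hmax⟩ :=
            Set.Finite.exists_maximalFor id {L : Subgroup G | L.Normal ∧ L < M}
              (Set.toFinite _) ⟨⊥, inferInstance, bot_lt_iff_ne_bot.mpr hMbot⟩
          have chief : IsChiefFactor M K := by
            refine ⟨hKn, hMn, hKM, ?_⟩
            intro L hLn hKL hLM
            by_cases hLM' : L = M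
            · exact Or.inr hLM'
            · exact Or.inl (le_antisymm (hmax ⟨hLn, lt_of_le_of_ne hLM hLM'⟩ hKL) hKL)
          have hxQ : x ∈ quotCentralizer M K hKn :=
            sInf_le (show quotCentralizer M K hKn ∈ TQ from ⟨M, K, chief, hMN, rfl⟩) hxD
          have hcomm : ∀ h ∈ M, x⁻¹ * h⁻¹ * x * h ∈ K :=
            (mem_quotCentralizer_iff hKn x).mp hxQ
          have hKcard : Nat.card K ≤ n := by
            have hss : (K : Set G) ⊂ (M : Set G) := by
              exact ⟨SetLike.coe_subset_coe.mpr hKM.le, fun hsub =>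
                hKM.ne (SetLike.coe_injective (le_antisymm
                  (SetLike.coe_subset_coe.mpr hKM.le) hsub : (K : Set G) = M))⟩
            have hlt : Nat.card K < Nat.card M :=
              Set.Finite.card_lt_card (Set.toFinite (M : Set G)) hss
            omega
          have kfix : ∀ z ∈ K, x⁻¹ * z * x = z :=
            ihn K hKn (hKM.le.trans hMN) hKcard
          set c := x⁻¹ * y⁻¹ * x * y with hcdef
          have hcK : c ∈ K := hcomm y hy
          have hα : x⁻¹ * y * x = y * c⁻¹ := by rw [hcdef]; group
          have hfix : ∀ k : ℕ, x⁻¹ * c⁻¹ ^ k * x = c⁻¹ ^ k := by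
            intro k
            induction k with
            | zero => simp
            | succ k ihk =>
              calc x⁻¹ * c⁻¹ ^ (k + 1) * x
                  = (x⁻¹ * c⁻¹ ^ k * x) * (x⁻¹ * c⁻¹ * x) := by rw [pow_succ]; group
              _ = c⁻¹ ^ k * c⁻¹ := by rw [ihk, kfix c⁻¹ (inv_mem hcK)]
              _ = c⁻¹ ^ (k + 1) := by rw [pow_succ]
          have hiter : ∀ k : ℕ, (x ^ k)⁻¹ * y * x ^ k = y * c⁻¹ ^ k := by
            intro k
            induction k with
            | zero => simp
            | succ k ihk =>
              calc (x ^ (k + 1))⁻¹ * y * x ^ (k + 1)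
                  = x⁻¹ * ((x ^ k)⁻¹ * y * x ^ k) * x := by rw [pow_succ]; group
              _ = x⁻¹ * (y * c⁻¹ ^ k) * x := by rw [ihk]
              _ = (x⁻¹ * y * x) * (x⁻¹ * c⁻¹ ^ k * x) := by group
              _ = (y * c⁻¹) * c⁻¹ ^ k := by rw [hα, hfix k]
              _ = y * c⁻¹ ^ (k + 1) := by rw [pow_succ]; group
          have hxpy : (x ^ p)⁻¹ * y * x ^ p = y := by
            have hc2 : y * x ^ p = x ^ p * y :=
              Subgroup.mem_centralizer_iff.mp hxpC y (hMN hy)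
            calc (x ^ p)⁻¹ * y * x ^ p = (x ^ p)⁻¹ * (y * x ^ p) := by group
            _ = (x ^ p)⁻¹ * (x ^ p * y) := by rw [hc2]
            _ = y := by group
          have hcp : c⁻¹ ^ p = 1 := by
            have := (hiter p).symm.trans hxpy
            exact mul_left_cancel (a := y) (by rw [this, mul_one])
          rcases pp.eq_one_or_self_of_dvd _ (orderOf_dvd_of_pow_eq_one hcp) with h | h
          · have hc1 : c⁻¹ = 1 := orderOf_eq_one_iff.mp h
            rw [hα, hc1, mul_one]
          · exfalso
            apply hpN
            have h1 : p ∣ Nat.card K := h ▸ Subgroup.orderOf_dvd_natCard K (inv_mem hcK)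
            exact h1.trans (Subgroup.card_dvd_of_le (hKM.le.trans hMN))
    have hxC : x ∈ C := by
      rw [hCdef]
      refine Subgroup.mem_centralizer_iff.mpr (fun z hz => ?_)
      have h1 : x⁻¹ * z * x = z := stab (Nat.card N) N hN le_rfl le_rfl z hz
      calc z * x = x * (x⁻¹ * z * x) := by group
      _ = x * z := by rw [h1]
    exact hxnotC hxC
  constructor
  · exact ⟨fun h => sInf_le (show C ∈ _ from ⟨hCn, P1 h⟩), P3⟩
  · exact ⟨P1, fun h => P3 (sInf_le (show C ∈ _ from ⟨hCn, h⟩))⟩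
end

section
/- Let A be a σ-subnormal subgroup of a finite group G, and suppose A is a σ_i-group. Then A ≤ O_{σ_i}(G); that is, A is contained in the largest normal σ_i-subgroup of G. -/
open Subgroup Pointwise

set_option linter.unusedSectionVars false

section AuxLemmas

variable {X Y : Type*} [Group X] [Group Y]

theorem IsPiGroup.of_dvd {π : Set ℕ} (h : IsPiGroup π X) {Z : Type*}
    (hd : Nat.card Z ∣ Nat.card X) : IsPiGroup π Z :=
  fun p hp hpd => h p hp (hpd.trans hd)

theorem card_quotient_dvd_of_ker_le (f : X →* Y) (N : Subgroup X) [N.Normal]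
    (h : f.ker ≤ N) : Nat.card (X ⧸ N) ∣ Nat.card Y := by
  have h1 : Nat.card (X ⧸ N) ∣ Nat.card (X ⧸ f.ker) := by
    rw [← Subgroup.index_eq_card, ← Subgroup.index_eq_card]
    exact Subgroup.index_dvd_of_le h
  refine h1.trans ?_
  rw [Nat.card_congr (QuotientGroup.quotientKerEquivRange f).toEquiv]
  exact Subgroup.card_subgroup_dvd_card _

theorem card_dvd_quotient_of_surjective (f : X →* Y) (hf : Function.Surjective f)
    {N : Subgroup X} [N.Normal] (h : N ≤ f.ker) : Nat.card Y ∣ Nat.card (X ⧸ N) := by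
  rw [← Nat.card_congr (QuotientGroup.quotientKerEquivOfSurjective f hf).toEquiv,
    ← Subgroup.index_eq_card, ← Subgroup.index_eq_card]
  exact Subgroup.index_dvd_of_le h

variable (π : Set ℕ)

theorem le_piCore {N : Subgroup X} (hn : N.Normal) (hp : IsPiGroup π N) :
    N ≤ piCore π X :=
  le_sSup ⟨hn, hp⟩

theorem piGroup_bot : IsPiGroup π (⊥ : Subgroup X) := by
  intro p hp hd
  rw [Subgroup.card_bot] at hd
  exact absurd (Nat.eq_one_of_dvd_one hd) hp.ne_one

theorem piGroup_sup {N K : Subgroup X} [Finite X] (hN : N.Normal)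
    (hpN : IsPiGroup π N) (hpK : IsPiGroup π K) : IsPiGroup π ↥(N ⊔ K) := by
  intro p hp hd
  have h1 : Nat.card ↥(N ⊔ K) =
      Nat.card (↥(N ⊔ K) ⧸ N.subgroupOf (N ⊔ K)) * Nat.card (N.subgroupOf (N ⊔ K)) :=
    Subgroup.card_eq_card_quotient_mul_card_subgroup _
  have h2 : Nat.card (↥(N ⊔ K) ⧸ N.subgroupOf (N ⊔ K)) ∣ Nat.card K := by
    rw [sup_comm N K] at *
    rw [← Nat.card_congr (QuotientGroup.quotientInfEquivProdNormalQuotient K N).toEquiv]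
    exact Subgroup.card_quotient_dvd_card _
  have h3 : Nat.card (N.subgroupOf (N ⊔ K)) = Nat.card N :=
    Nat.card_congr (Subgroup.subgroupOfEquivOfLe le_sup_left).toEquiv
  rw [h1, h3] at hd
  rcases hp.dvd_mul.mp hd with h | h
  · exact hpK p hp (h.trans h2)
  · exact hpN p hp h

theorem piCore_normal_piGroup [Finite X] :
    (piCore π X).Normal ∧ IsPiGroup π (piCore π X) := by
  have heq : piCore π X =
      (Set.toFinite {N : Subgroup X | N.Normal ∧ IsPiGroup π N}).toFinset.sup id := by
    rw [Finset.sup_id_eq_sSup, Set.Finite.coe_toFinset]; rfl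
  rw [heq]
  refine Finset.sup_induction (p := fun N : Subgroup X => N.Normal ∧ IsPiGroup π ↥N)
    ⟨inferInstanceAs (⊥ : Subgroup X).Normal, piGroup_bot π⟩ ?_ ?_
  · rintro a ⟨ha1, ha2⟩ b ⟨hb1, hb2⟩
    exact ⟨@Subgroup.sup_normal _ _ a b ha1 hb1, piGroup_sup π ha1 ha2 hb2⟩
  · intro N hN
    rw [Set.Finite.mem_toFinset] at hN
    exact hN

theorem piCore_normal [Finite X] : (piCore π X).Normal := (piCore_normal_piGroup π).1

theorem piCore_piGroup [Finite X] : IsPiGroup π (piCore π X) := (piCore_normal_piGroup π).2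

theorem map_subtype_piCore_normal [Finite X] {K : Subgroup X} (hK : K.Normal) :
    ((piCore π K).map K.subtype).Normal := by
  haveI := hK
  obtain ⟨hn, hp⟩ := piCore_normal_piGroup π (X := K)
  have key : ∀ (e : ↥K ≃* ↥K) (z : ↥K), z ∈ piCore π ↥K → e z ∈ piCore π ↥K := by
    intro e z hz
    have hmap : (piCore π ↥K).map e.toMonoidHom ≤ piCore π ↥K := by
      refine le_piCore π (hn.map _ e.surjective) (hp.of_dvd ?_)
      exact (Nat.card_congr
        (Subgroup.equivMapOfInjective _ _ e.injective).toEquiv).symm.dvd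
    exact hmap ⟨z, hz, rfl⟩
  constructor
  intro x hx g
  obtain ⟨y, hy, rfl⟩ := hx
  exact ⟨MulAut.conjNormal g y, key _ y hy, by simp [MulAut.conjNormal_apply]⟩

theorem map_subtype_piCore_piGroup [Finite X] (K : Subgroup X) :
    IsPiGroup π ((piCore π K).map K.subtype) :=
  (piCore_piGroup π).of_dvd
    (Nat.card_congr (Subgroup.equivMapOfInjective _ _ K.subtype_injective).toEquiv).symm.dvd

theorem map_subtype_piCore_le [Finite X] {K : Subgroup X} (hK : K.Normal) :
    (piCore π K).map K.subtype ≤ piCore π X :=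
  le_piCore π (map_subtype_piCore_normal π hK) (map_subtype_piCore_piGroup π K)

end AuxLemmas

section ChainLemmas

variable {I : Type*} {σ : I → Set ℕ} {G : Type*} [Group G]

theorem chain_zero_le {n : ℕ} {c : Fin (n + 1) → Subgroup G}
    (h : ∀ i : Fin n, c i.castSucc ≤ c i.succ) (k : Fin (n + 1)) : c 0 ≤ c k := by
  induction k using Fin.induction with
  | zero => exact le_rfl
  | succ i ih => exact ih.trans (h i)

theorem IsSigmaSubnormal.inf_subgroupOf {A : Subgroup G} (hA : IsSigmaSubnormal σ A)
    (H : Subgroup G) : IsSigmaSubnormal σ ((A ⊓ H).subgroupOf H) := by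
  obtain ⟨n, c, hc0, hclast, hstep⟩ := hA
  refine ⟨n, fun k => (c k ⊓ H).subgroupOf H, by simp only [hc0],
    by simp only [hclast, top_inf_eq, Subgroup.subgroupOf_self], ?_⟩
  intro ii
  obtain ⟨hle, hd⟩ := hstep ii
  constructor
  · intro x hx
    rw [Subgroup.mem_subgroupOf] at hx ⊢
    exact ⟨hle hx.1, hx.2⟩
  rcases hd with hNrm | ⟨j, hj⟩
  · left
    constructor
    intro x hx g
    rw [Subgroup.mem_subgroupOf] at hx ⊢
    have hxs : (((x : ↥H) : G)) ∈ c ii.succ ⊓ H := Subgroup.mem_subgroupOf.mp x.2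
    have hgs : (((g : ↥H) : G)) ∈ c ii.succ ⊓ H := Subgroup.mem_subgroupOf.mp g.2
    have hconj := hNrm.conj_mem ⟨((x : ↥H) : G), hxs.1⟩
      (Subgroup.mem_subgroupOf.mpr hx.1) ⟨((g : ↥H) : G), hgs.1⟩
    rw [Subgroup.mem_subgroupOf] at hconj
    refine Subgroup.mem_subgroupOf.mpr ⟨hconj, ((g * x * g⁻¹ : ↥H)).2⟩
  · right
    refine ⟨j, hj.of_dvd ?_⟩
    set core := ((c ii.castSucc).subgroupOf (c ii.succ)).normalCore with hcore
    refine card_quotient_dvd_of_ker_le ((QuotientGroup.mk' core).comp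
      (((H.subtype.comp ((c ii.succ ⊓ H).subgroupOf H).subtype)).codRestrict
        (c ii.succ) (fun x => (Subgroup.mem_subgroupOf.mp x.2).1))) _
      (Subgroup.normal_le_normalCore.mpr ?_)
    intro x hx
    rw [MonoidHom.mem_ker, MonoidHom.comp_apply, ← MonoidHom.mem_ker,
      QuotientGroup.ker_mk'] at hx
    have hx1 := ((c ii.castSucc).subgroupOf (c ii.succ)).normalCore_le hx
    rw [Subgroup.mem_subgroupOf] at hx1
    rw [Subgroup.mem_subgroupOf, Subgroup.mem_subgroupOf]
    exact ⟨hx1, ((x : ↥H)).2⟩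

theorem IsSigmaSubnormal.map_mk' {A N : Subgroup G} (hA : IsSigmaSubnormal σ A)
    (hN : N.Normal) : IsSigmaSubnormal σ (A.map (QuotientGroup.mk' N)) := by
  haveI := hN
  obtain ⟨n, c, hc0, hclast, hstep⟩ := hA
  refine ⟨n, fun k => (c k).map (QuotientGroup.mk' N), by simp only [hc0], ?_, ?_⟩
  · simp only [hclast]
    exact Subgroup.map_top_of_surjective _ (QuotientGroup.mk'_surjective N)
  intro ii
  obtain ⟨hle, hd⟩ := hstep ii
  refine ⟨Subgroup.map_mono hle, ?_⟩
  rcases hd with hNrm | ⟨j, hj⟩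
  · left
    constructor
    intro x hx g
    rw [Subgroup.mem_subgroupOf] at hx ⊢
    obtain ⟨a, ha, hax⟩ := hx
    obtain ⟨b, hb, hbg⟩ := g.2
    have hconj := hNrm.conj_mem ⟨a, hle ha⟩ (Subgroup.mem_subgroupOf.mpr ha) ⟨b, hb⟩
    rw [Subgroup.mem_subgroupOf] at hconj
    refine ⟨b * a * b⁻¹, hconj, ?_⟩
    push_cast
    rw [map_mul, map_mul, map_inv, hax, hbg]
  · right
    refine ⟨j, hj.of_dvd ?_⟩
    set core := ((c ii.castSucc).subgroupOf (c ii.succ)).normalCore with hcore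
    set ι := (QuotientGroup.mk' N).subgroupMap (c ii.succ) with hι
    have hιs : Function.Surjective ι := MonoidHom.subgroupMap_surjective _ _
    set S' := (((c ii.castSucc).map (QuotientGroup.mk' N)).subgroupOf
      ((c ii.succ).map (QuotientGroup.mk' N))) with hS'
    have hker : core ≤ (((QuotientGroup.mk' S'.normalCore)).comp ι).ker := by
      intro x hx
      rw [MonoidHom.mem_ker, MonoidHom.comp_apply, ← MonoidHom.mem_ker,
        QuotientGroup.ker_mk']
      haveI : ((core.map ι)).Normal :=
        (Subgroup.normalCore_normal _).map ι hιs
      refine Subgroup.normal_le_normalCore.mpr ?_ (Subgroup.mem_map_of_mem ι hx)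
      rintro y ⟨z, hz, rfl⟩
      rw [Subgroup.mem_subgroupOf]
      have hz1 := ((c ii.castSucc).subgroupOf (c ii.succ)).normalCore_le hz
      rw [Subgroup.mem_subgroupOf] at hz1
      exact Subgroup.mem_map_of_mem _ hz1
    refine card_dvd_quotient_of_surjective ((QuotientGroup.mk' S'.normalCore).comp ι) ?_ hker
    rw [MonoidHom.coe_comp]
    exact (QuotientGroup.mk'_surjective _).comp hιs

end ChainLemmas

universe u v

theorem sigmaSubnormal_le_piCore_aux : ∀ (M : ℕ) {I : Type u} (σ : I → Set ℕ),
    IsPrimePartition σ → ∀ (G : Type v) [Group G] [Finite G], Nat.card G ≤ M →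
    ∀ (A : Subgroup G), IsSigmaSubnormal σ A → ∀ i, IsPiGroup (σ i) A →
    A ≤ piCore (σ i) G := by
  intro M
  induction M with
  | zero =>
    intro I σ hσ G _ _ hcard
    have := Nat.card_pos (α := G)
    omega
  | succ M ih =>
    intro I σ hσ G _ _ hcard A hA i hAi
    have hGpos : 0 < Nat.card G := Nat.card_pos
    by_cases hAbot : A = ⊥
    · rw [hAbot]; exact bot_le
    have houter : ∀ (X : Type v) [Group X] [Finite X], Nat.card X < Nat.card G →
        ∀ (B : Subgroup X), IsSigmaSubnormal σ B → IsPiGroup (σ i) B →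
        B ≤ piCore (σ i) X := by
      intro X _ _ hlt B hB hBi
      exact ih σ hσ X (by omega) B hB i hBi
    have hcard_lt : ∀ K : Subgroup G, K ≠ ⊤ → Nat.card ↥K < Nat.card G := by
      intro K hK
      have hle : Nat.card ↥K ≤ Nat.card G :=
        Nat.le_of_dvd hGpos (Subgroup.card_subgroup_dvd_card K)
      rcases hle.lt_or_eq with h | h
      · exact h
      · exact absurd (Subgroup.eq_top_of_card_eq K h) hK
    have helperR : ∀ K : Subgroup G, K.Normal → K ≠ ⊤ → A ≤ K →
        A ≤ piCore (σ i) G := by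
      intro K hKn hKt hAK
      have h1 : IsSigmaSubnormal σ (A.subgroupOf K) := by
        have := hA.inf_subgroupOf K
        rwa [inf_of_le_left hAK] at this
      have h2 : IsPiGroup (σ i) (A.subgroupOf K) :=
        hAi.of_dvd (Nat.card_congr (Subgroup.subgroupOfEquivOfLe hAK).toEquiv).dvd
      have h3 := houter ↥K (hcard_lt K hKt) (A.subgroupOf K) h1 h2
      have h4 : A ≤ (piCore (σ i) ↥K).map K.subtype := by
        have := Subgroup.map_mono (f := K.subtype) h3
        rwa [Subgroup.subgroupOf_map_subtype, inf_of_le_left hAK] at this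
      exact h4.trans (map_subtype_piCore_le _ hKn)
    have htopcase : IsPiGroup (σ i) G → A ≤ piCore (σ i) G := by
      intro h
      refine le_top.trans (le_piCore _ ?_ ?_)
      · infer_instance
      · exact h.of_dvd (Nat.card_congr Subgroup.topEquiv.toEquiv).dvd
    have inner : ∀ (n : ℕ) (c : Fin (n + 1) → Subgroup G), c 0 = A →
        c (Fin.last n) = ⊤ →
        (∀ ii : Fin n, c ii.castSucc ≤ c ii.succ ∧
          (((c ii.castSucc).subgroupOf (c ii.succ)).Normal ∨
            IsSigmaPrimary σ
              (↥(c ii.succ) ⧸ ((c ii.castSucc).subgroupOf (c ii.succ)).normalCore))) →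
        A ≤ piCore (σ i) G := by
      intro n
      induction n with
      | zero =>
        intro c h0 hl _
        apply htopcase
        have hAtop : A = ⊤ := h0 ▸ hl
        refine hAi.of_dvd ?_
        rw [hAtop, Subgroup.card_top]
      | succ m ihn =>
        intro c h0 hl hs
        by_cases hMT : c (Fin.castSucc (Fin.last m)) = ⊤
        · refine ihn (fun k => c k.castSucc) (by simpa using h0) hMT ?_
          intro ii
          have h := hs ii.castSucc
          simp only [Fin.succ_castSucc] at h ⊢
          exact h
        · set Mg := c (Fin.castSucc (Fin.last m)) with hMg
          have hAM : A ≤ Mg := h0 ▸ chain_zero_le (fun ii => (hs ii).1) _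
          obtain ⟨hleM, hdM⟩ := hs (Fin.last m)
          rw [Fin.succ_last, hl] at hdM
          rcases hdM with hMnorm | ⟨j, hj⟩
          · have hMn : Mg.Normal := by
              constructor
              intro x hx g
              have := hMnorm.conj_mem ⟨x, Subgroup.mem_top x⟩
                (Subgroup.mem_subgroupOf.mpr hx) ⟨g, Subgroup.mem_top g⟩
              exact Subgroup.mem_subgroupOf.mp this
            exact helperR Mg hMn hMT hAM
          · set C := Mg.normalCore with hCdef
            have hGC : IsPiGroup (σ j) (G ⧸ C) := by
              refine hj.of_dvd ?_
              refine card_quotient_dvd_of_ker_le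
                ((QuotientGroup.mk' ((Mg.subgroupOf ⊤).normalCore)).comp
                  Subgroup.topEquiv.symm.toMonoidHom) C ?_
              intro x hx
              rw [MonoidHom.mem_ker, MonoidHom.comp_apply, ← MonoidHom.mem_ker,
                QuotientGroup.ker_mk'] at hx
              show ∀ b : G, b * x * b⁻¹ ∈ Mg
              intro b
              have h2 := hx ⟨b, Subgroup.mem_top b⟩
              rw [Subgroup.mem_subgroupOf] at h2
              exact h2
            have hCle : C ≤ Mg := Mg.normalCore_le
            have hCT : C ≠ ⊤ := fun h => hMT (top_le_iff.mp (h ▸ hCle))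
            by_cases hAC : A ≤ C
            · exact helperR C (Subgroup.normalCore_normal Mg) hCT hAC
            · -- i = j
              obtain ⟨a, haA, haC⟩ := SetLike.not_le_iff_exists.mp hAC
              have hBne : A.map (QuotientGroup.mk' C) ≠ ⊥ := by
                intro h
                have hm : (QuotientGroup.mk' C) a ∈ A.map (QuotientGroup.mk' C) :=
                  Subgroup.mem_map_of_mem _ haA
                rw [h, Subgroup.mem_bot] at hm
                exact haC ((QuotientGroup.eq_one_iff a).mp hm)
              obtain ⟨p, hp, hpd⟩ :=
                Nat.exists_prime_and_dvd (fun h1 => hBne (Subgroup.card_eq_one.mp h1))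
              have hmapdvd : Nat.card (A.map (QuotientGroup.mk' C)) ∣ Nat.card A :=
                Subgroup.card_dvd_of_surjective _
                  (MonoidHom.subgroupMap_surjective (QuotientGroup.mk' C) A)
              have hpi : p ∈ σ i := hAi p hp (hpd.trans hmapdvd)
              have hpj : p ∈ σ j :=
                hGC p hp (hpd.trans (Subgroup.card_subgroup_dvd_card _))
              obtain ⟨k, hk, huniq⟩ := hσ.2 p hp
              have hij : i = j := (huniq i hpi).trans (huniq j hpj).symm
              rw [← hij] at hGC
              by_cases hCbot : C = ⊥
              · apply htopcase
                refine hGC.of_dvd ?_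
                rw [hCbot]
                exact (Nat.card_congr (QuotientGroup.quotientBot (G := G)).toEquiv).symm.dvd
              · -- minimal normal subgroup inside C
                obtain ⟨N, ⟨hNnorm, hNbot, hNC⟩, hNmin'⟩ :=
                  Set.Finite.exists_minimal
                    (Set.toFinite {K : Subgroup G | K.Normal ∧ K ≠ ⊥ ∧ K ≤ C})
                    ⟨C, Subgroup.normalCore_normal Mg, hCbot, le_rfl⟩
                have hNmin : ∀ B : Subgroup G, B.Normal → B ≠ ⊥ → B ≤ N → B = N :=
                  fun B h1 h2 h3 => le_antisymm h3 (hNmin' ⟨h1, h2, h3.trans hNC⟩ h3)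
                haveI := hNnorm
                have hNlt : 1 < Nat.card N := (Subgroup.one_lt_card_iff_ne_bot (H := N)).mpr hNbot
                have hcardq : Nat.card (G ⧸ N) < Nat.card G := by
                  have h2 : 0 < Nat.card (G ⧸ N) := Nat.card_pos
                  rw [Subgroup.card_eq_card_quotient_mul_card_subgroup N]
                  exact lt_of_lt_of_le (by omega)
                    (Nat.mul_le_mul_left (Nat.card (G ⧸ N)) hNlt)
                have hAq := hA.map_mk' hNnorm
                have hAqi : IsPiGroup (σ i) (A.map (QuotientGroup.mk' N)) :=
                  hAi.of_dvd (Subgroup.card_dvd_of_surjective _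
                    (MonoidHom.subgroupMap_surjective (QuotientGroup.mk' N) A))
                have hmapped := houter (G ⧸ N) hcardq _ hAq hAqi
                set V := (piCore (σ i) (G ⧸ N)).comap (QuotientGroup.mk' N) with hV
                have hAV : A ≤ V := fun b hb => hmapped (Subgroup.mem_map_of_mem _ hb)
                have hVnorm : V.Normal := (piCore_normal _).comap _
                by_cases hVT : V = ⊤
                · -- G⧸N is a σ i group : endgame
                  have hq : IsPiGroup (σ i) (G ⧸ N) := by
                    have htop : piCore (σ i) (G ⧸ N) = ⊤ := by
                      rw [eq_top_iff]
                      intro y _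
                      obtain ⟨g, rfl⟩ := QuotientGroup.mk'_surjective N y
                      exact (hVT ▸ Subgroup.mem_top g : g ∈ V)
                    exact (piCore_piGroup (σ i)).of_dvd (by rw [htop, Subgroup.card_top])
                  by_cases hNpi : IsPiGroup (σ i) N
                  · apply htopcase
                    intro q hq' hqd
                    rw [Subgroup.card_eq_card_quotient_mul_card_subgroup N] at hqd
                    rcases hq'.dvd_mul.mp hqd with h | h
                    · exact hq q hq' h
                    · exact hNpi q hq' h
                  · unfold IsPiGroup at hNpi
                    push_neg at hNpi
                    obtain ⟨p', hp', hpN, hpnotin⟩ := hNpi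
                    -- D := piCore of Mg mapped into G
                    have h1 : IsSigmaSubnormal σ (A.subgroupOf Mg) := by
                      have := hA.inf_subgroupOf Mg
                      rwa [inf_of_le_left hAM] at this
                    have h2 : IsPiGroup (σ i) (A.subgroupOf Mg) :=
                      hAi.of_dvd (Nat.card_congr
                        (Subgroup.subgroupOfEquivOfLe hAM).toEquiv).dvd
                    have h3 := houter ↥Mg (hcard_lt Mg hMT) (A.subgroupOf Mg) h1 h2
                    set D := (piCore (σ i) ↥Mg).map Mg.subtype with hDdef
                    have hAD : A ≤ D := by
                      have := Subgroup.map_mono (f := Mg.subtype) h3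
                      rwa [Subgroup.subgroupOf_map_subtype, inf_of_le_left hAM] at this
                    have hDM : ∀ x ∈ Mg, ∀ d ∈ D, x * d * x⁻¹ ∈ D := by
                      intro x hx d hd
                      obtain ⟨y, hy, rfl⟩ := hd
                      exact ⟨⟨x, hx⟩ * y * ⟨x, hx⟩⁻¹,
                        (piCore_normal _).conj_mem y hy ⟨x, hx⟩, rfl⟩
                    have hDpi : IsPiGroup (σ i) D := map_subtype_piCore_piGroup _ Mg
                    have hNM : N ≤ Mg := hNC.trans hCle
                    -- E = ⊥
                    have hEbot : (piCore (σ i) ↥N).map N.subtype = ⊥ := by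
                      by_contra hE
                      have hEN : (piCore (σ i) ↥N).map N.subtype = N :=
                        hNmin _ (map_subtype_piCore_normal _ hNnorm) hE
                          (Subgroup.map_subtype_le _)
                      have : IsPiGroup (σ i) N :=
                        (map_subtype_piCore_piGroup (σ i) N).of_dvd (by rw [hEN])
                      exact hpnotin (this p' hp' hpN)
                    have hDN : D ⊓ N = ⊥ := by
                      have hsub : ((D ⊓ N).subgroupOf N) ≤ piCore (σ i) ↥N := by
                        refine le_piCore _ ?_ ?_
                        · constructor
                          intro y hy x
                          rw [Subgroup.mem_subgroupOf] at hy ⊢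
                          refine Subgroup.mem_inf.mpr ⟨?_, (x * y * x⁻¹ : ↥N).2⟩
                          have := hDM (x : G) (hNM x.2) (y : G) (Subgroup.mem_inf.mp hy).1
                          exact this
                        · refine hDpi.of_dvd ?_
                          have he : Nat.card ((D ⊓ N).subgroupOf N) = Nat.card (D ⊓ N : Subgroup G) :=
                            Nat.card_congr (Subgroup.subgroupOfEquivOfLe inf_le_right).toEquiv
                          rw [he]
                          exact Subgroup.card_dvd_of_le inf_le_left
                      have := Subgroup.map_mono (f := N.subtype) hsub
                      rwa [Subgroup.subgroupOf_map_subtype, inf_of_le_left inf_le_right,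
                        hEbot, le_bot_iff] at this
                    have hcent : A ≤ Subgroup.centralizer (N : Set G) := by
                      intro b hb
                      rw [Subgroup.mem_centralizer_iff]
                      intro s hs
                      have hcomm : b * s * b⁻¹ * s⁻¹ ∈ D ⊓ N := by
                        refine Subgroup.mem_inf.mpr ⟨?_, ?_⟩
                        · have h4 := hDM s (hNM hs) b⁻¹ (inv_mem (hAD hb))
                          have h5 : b * s * b⁻¹ * s⁻¹ = b * (s * b⁻¹ * s⁻¹) := by group
                          rw [h5]
                          exact mul_mem (hAD hb) h4
                        · exact mul_mem (hNnorm.conj_mem s hs b) (inv_mem hs)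
                      rw [hDN, Subgroup.mem_bot] at hcomm
                      have h6 : b * s = (b * s * b⁻¹ * s⁻¹) * (s * b) := by group
                      rw [hcomm, one_mul] at h6
                      exact h6.symm
                    set Z := Subgroup.centralizer (N : Set G) with hZdef
                    have hZnorm : Z.Normal := centralizer_normal_of_normal hNnorm
                    by_cases hZT : Z = ⊤
                    · -- N is central; Schur-Zassenhaus endgame
                      have hZmem : ∀ (z : G) (s : G), s ∈ N → s * z = z * s := by
                        intro z s hs
                        exact Subgroup.mem_centralizer_iff.mp
                          (hZT ▸ Subgroup.mem_top z : z ∈ Z) s hs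
                      haveI : Fact p'.Prime := ⟨hp'⟩
                      obtain ⟨x, hxord⟩ := exists_prime_orderOf_dvd_card' p' hpN
                      set P := Subgroup.zpowers (x : G) with hPdef
                      have hPN : P ≤ N := Subgroup.zpowers_le.mpr x.2
                      have hPnorm : P.Normal := by
                        constructor
                        intro y hy g
                        have hyc : y * g = g * y := hZmem g y (hPN hy)
                        have : g * y * g⁻¹ = y := by
                          rw [← hyc]; group
                        rw [this]; exact hy
                      have hPcard : Nat.card P = p' := by
                        rw [Nat.card_zpowers]
                        exact (orderOf_injective N.subtype N.subtype_injective x).trans hxord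
                      have hPbot : P ≠ ⊥ := by
                        intro h
                        rw [h, Subgroup.card_bot] at hPcard
                        exact hp'.ne_one hPcard.symm
                      have hPeqN : P = N := hNmin P hPnorm hPbot hPN
                      have hNcard : Nat.card N = p' := by rw [← hPeqN]; exact hPcard
                      have hcop : (Nat.card N).Coprime N.index := by
                        rw [hNcard]
                        refine (Nat.Prime.coprime_iff_not_dvd hp').mpr ?_
                        intro hdvd
                        refine hpnotin (hq p' hp' ?_)
                        rwa [← Subgroup.index_eq_card]
                      obtain ⟨H, hH⟩ := Subgroup.exists_right_complement'_of_coprime hcop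
                      have hHnorm : H.Normal := by
                        constructor
                        intro h hh g
                        obtain ⟨⟨n', h'⟩, hnh⟩ := (hH.existsUnique g).exists
                        have hc1 : (n' : G) * ((h' : G) * h * (h' : G)⁻¹) =
                            ((h' : G) * h * (h' : G)⁻¹) * (n' : G) :=
                          hZmem ((h' : G) * h * (h' : G)⁻¹) (n' : G) n'.2
                        have hw : g * h * g⁻¹ = (h' : G) * h * (h' : G)⁻¹ := by
                          calc g * h * g⁻¹
                              = ((n' : G) * (h' : G)) * h * ((n' : G) * (h' : G))⁻¹ := by
                                rw [hnh]
                            _ = (n' : G) * ((h' : G) * h * (h' : G)⁻¹) * (n' : G)⁻¹ := by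
                                group
                            _ = ((h' : G) * h * (h' : G)⁻¹) * (n' : G) * (n' : G)⁻¹ := by
                                rw [hc1]
                            _ = (h' : G) * h * (h' : G)⁻¹ := by group
                        rw [hw]
                        exact mul_mem (mul_mem h'.2 hh) (inv_mem h'.2)
                      have hHind : H.index = p' := by
                        rw [hH.index_eq_card, hNcard]
                      have hHpi : IsPiGroup (σ i) H := by
                        refine hq.of_dvd ?_
                        have h7 : Nat.card N * Nat.card H = Nat.card G := hH.card_mul
                        have h8 : Nat.card N * Nat.card (G ⧸ N) = Nat.card G := by
                          rw [Subgroup.card_eq_card_quotient_mul_card_subgroup N]; ring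
                        have h9 : Nat.card H = Nat.card (G ⧸ N) := by
                          have := h7.trans h8.symm
                          exact Nat.eq_of_mul_eq_mul_left (by omega) this
                        rw [h9]
                      have hHle : H ≤ piCore (σ i) G := le_piCore _ hHnorm hHpi
                      refine le_trans ?_ hHle
                      intro b hb
                      have hcd1 : Nat.card (A.map (QuotientGroup.mk' H)) ∣ p' := by
                        rw [← hHind, Subgroup.index_eq_card]
                        exact Subgroup.card_subgroup_dvd_card _
                      have hcd2 : Nat.card (A.map (QuotientGroup.mk' H)) ∣ Nat.card A :=
                        Subgroup.card_dvd_of_surjective _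
                          (MonoidHom.subgroupMap_surjective (QuotientGroup.mk' H) A)
                      rcases (Nat.Prime.eq_one_or_self_of_dvd hp' _ hcd1) with h1 | h1
                      · have hB : A.map (QuotientGroup.mk' H) = ⊥ :=
                          Subgroup.card_eq_one.mp h1
                        have hm : (QuotientGroup.mk' H) b ∈ A.map (QuotientGroup.mk' H) :=
                          Subgroup.mem_map_of_mem _ hb
                        rw [hB, Subgroup.mem_bot] at hm
                        exact (QuotientGroup.eq_one_iff b).mp hm
                      · exact absurd (hAi p' hp' (h1 ▸ hcd2)) hpnotin
                    · exact helperR Z hZnorm hZT hcent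
                · exact helperR V hVnorm hVT hAV
    obtain ⟨n, c, h0, hlast, hsteps⟩ := hA
    exact inner n c h0 hlast hsteps


/-- A `σ`-subnormal `σ i`-subgroup of `G` is contained in
`O_{σ i}(G)`, the largest normal `σ i`-subgroup of `G`. -/
theorem sigmaSubnormal_le_piCore {I : Type*} (σ : I → Set ℕ)
    (hσ : IsPrimePartition σ) {G : Type*} [Group G] [Finite G] (A : Subgroup G)
    (hA : IsSigmaSubnormal σ A) (i : I) (hAi : IsPiGroup (σ i) A) :
    A ≤ piCore (σ i) G :=
  sigmaSubnormal_le_piCore_aux (Nat.card G) σ hσ G le_rfl A hA i hAi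
end
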